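/- For n = 2, the optimal classical average success probability of the d-dimensional random access code equals 1/2 + 1/(2d). -/

import Mathlib

/-- For `n = 2`, the optimal classical average success probability of the
`d`-dimensional RAC equals `1/2 + 1/(2d)`. -/
theorem stmt_4 (d : ℕ) (hd : 0 < d) :
    IsGreatest {p : ℝ | ∃ (E : (Fin 2 → Fin d) → Fin d) (D : Fin 2 → Fin d → Fin d),
        p = (∑ a : Fin 2 → Fin d, ∑ y : Fin 2, if D y (E a) = a y then (1 : ℝ) else 0)
              / (2 * d ^ 2)}
      (1 / 2 + 1 / (2 * (d : ℝ))) := by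
  have hd' : (0:ℝ) < d := Nat.cast_pos.mpr hd
  have hkey : (1 / 2 + 1 / (2 * (d : ℝ))) * (2 * (d:ℝ)^2) = (d:ℝ)^2 + d := by
    field_simp
  constructor
  · refine ⟨fun a => a 0, fun _ x => x, ?_⟩
    have h1 : (∑ a : Fin 2 → Fin d, ∑ y : Fin 2,
        if (fun (_ : Fin 2) (x : Fin d) => x) y ((fun a : Fin 2 → Fin d => a 0) a) = a y
          then (1:ℝ) else 0) = (d:ℝ)^2 + d := by
      have hstep : (∑ a : Fin 2 → Fin d, ∑ y : Fin 2,
          if (fun (_ : Fin 2) (x : Fin d) => x) y ((fun a : Fin 2 → Fin d => a 0) a) = a y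
            then (1:ℝ) else 0)
          = ∑ p : Fin d × Fin d, ((1:ℝ) + if p.1 = p.2 then (1:ℝ) else 0) := by
        refine Fintype.sum_equiv (piFinTwoEquiv fun _ => Fin d) _ _ ?_
        intro a
        rw [Fin.sum_univ_two]
        simp [piFinTwoEquiv]
        exact if_congr Iff.rfl rfl rfl
      rw [hstep, Fintype.sum_prod_type]
      have hrow : ∀ x : Fin d, (∑ y : Fin d, ((1:ℝ) + if x = y then (1:ℝ) else 0))
          = (d:ℝ) + 1 := by
        intro x
        rw [Finset.sum_add_distrib, Finset.sum_ite_eq, Finset.sum_const]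
        simp
      rw [Finset.sum_congr rfl fun x _ => hrow x, Finset.sum_const]
      simp
      ring
    rw [h1, eq_div_iff (by positivity), hkey]
  · rintro p ⟨E, D, rfl⟩
    set T := Finset.univ.filter
      (fun a : Fin 2 → Fin d => D 0 (E a) = a 0 ∧ D 1 (E a) = a 1) with hT
    have hcard : T.card ≤ d := by
      have h := Finset.card_le_card_of_injOn (s := T) (t := (Finset.univ : Finset (Fin d))) E
        (fun a _ => Finset.mem_univ (E a)) ?_
      · simpa using h
      · intro a ha b hb hab
        simp only [hT, Finset.mem_coe, Finset.mem_filter] at ha hb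
        have e0 : a 0 = b 0 := by rw [← ha.2.1, ← hb.2.1, hab]
        have e1 : a 1 = b 1 := by rw [← ha.2.2, ← hb.2.2, hab]
        funext i
        fin_cases i
        · exact e0
        · exact e1
    have hsum : (∑ a : Fin 2 → Fin d, ∑ y : Fin 2, if D y (E a) = a y then (1:ℝ) else 0)
        ≤ (d:ℝ)^2 + d := by
      have hb : ∀ a : Fin 2 → Fin d, (∑ y : Fin 2, if D y (E a) = a y then (1:ℝ) else 0)
          ≤ 1 + (if a ∈ T then (1:ℝ) else 0) := by
        intro a
        rw [Fin.sum_univ_two]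
        by_cases h0 : D 0 (E a) = a 0 <;> by_cases h1 : D 1 (E a) = a 1 <;>
          simp [hT, h0, h1]
      calc (∑ a : Fin 2 → Fin d, ∑ y : Fin 2, if D y (E a) = a y then (1:ℝ) else 0)
          ≤ ∑ a : Fin 2 → Fin d, (1 + if a ∈ T then (1:ℝ) else 0) :=
            Finset.sum_le_sum fun a _ => hb a
        _ = (d:ℝ)^2 + T.card := by
            rw [Finset.sum_add_distrib]
            simp [Finset.sum_boole, Fintype.card_fun]
        _ ≤ (d:ℝ)^2 + d := by
            have h2 : (T.card : ℝ) ≤ d := Nat.cast_le.mpr hcard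
            linarith
    rw [div_le_iff₀ (by positivity), hkey]
    exact hsum
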